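/- arXiv:2506.03526 — 3 statements merged into one kernel-verified Lean document; each statement's English description precedes it below -/
import Mathlib

section
/- If A and B have full column rank, then the spectral radius of I − (BᵀB/‖B‖_F²) ⊗ (AᵀA/‖A‖_F²) satisfies 0 ≤ ρ < 1, where ⊗ denotes the Kronecker product. -/
open Matrix Kronecker

noncomputable def frobSq {m n : ℕ} (A : Matrix (Fin m) (Fin n) ℝ) : ℝ :=
  ∑ i, ∑ j, (A i j) ^ 2

noncomputable def specRad {n₁ n₂ : ℕ} (M : Matrix (Fin n₂ × Fin n₁) (Fin n₂ × Fin n₁) ℝ) : ℝ :=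
  sSup {r : ℝ | ∃ μ ∈ spectrum ℝ M, r = |μ|}

section Aux

variable {m n : ℕ}

lemma frobSq_pos {A : Matrix (Fin m) (Fin n) ℝ} (h : A ≠ 0) : 0 < frobSq A := by
  obtain ⟨i, j, hij⟩ : ∃ i j, A i j ≠ 0 := by
    by_contra hc
    push_neg at hc
    exact h (Matrix.ext fun i j => hc i j)
  have : (0:ℝ) < ∑ j', (A i j') ^ 2 := by
    refine Finset.sum_pos' (fun _ _ => sq_nonneg _) ⟨j, Finset.mem_univ _, by positivity⟩
  refine Finset.sum_pos' (fun _ _ => Finset.sum_nonneg fun _ _ => sq_nonneg _)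
    ⟨i, Finset.mem_univ _, this⟩

lemma quad_transpose_mul_self (A : Matrix (Fin m) (Fin n) ℝ) (x : Fin n → ℝ) :
    x ⬝ᵥ (Aᵀ * A) *ᵥ x = (A *ᵥ x) ⬝ᵥ (A *ᵥ x) := by
  rw [← Matrix.mulVec_mulVec, Matrix.dotProduct_mulVec, Matrix.vecMul_transpose]

lemma mulVec_inj_of_rank {A : Matrix (Fin m) (Fin n) ℝ} (h : A.rank = n) :
    Function.Injective A.mulVec := by
  have hrn := LinearMap.finrank_range_add_finrank_ker A.mulVecLin
  rw [Module.finrank_pi] at hrn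
  rw [Matrix.rank] at h
  simp only [Fintype.card_fin] at hrn
  have hker : Module.finrank ℝ (LinearMap.ker A.mulVecLin) = 0 := by omega
  have : LinearMap.ker A.mulVecLin = ⊥ :=
    Submodule.finrank_eq_zero.mp hker
  have hinj := LinearMap.ker_eq_bot.mp this
  intro x y hxy
  exact hinj (by simpa [Matrix.mulVecLin_apply] using hxy)

lemma posDef_transpose_mul_self {A : Matrix (Fin m) (Fin n) ℝ}
    (h : Function.Injective A.mulVec) : (Aᵀ * A).PosDef := by
  refine Matrix.posDef_iff_dotProduct_mulVec.mpr ⟨by simpa using Matrix.isHermitian_conjTranspose_mul_self A, fun x hx => ?_⟩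
  have hx' : A *ᵥ x ≠ 0 := by
    intro hc
    apply hx
    have := h (a₁ := x) (a₂ := 0)
    simp only [Matrix.mulVec_zero] at this
    exact this hc
  have : x ⬝ᵥ (Aᵀ * A) *ᵥ x = (A *ᵥ x) ⬝ᵥ (A *ᵥ x) := quad_transpose_mul_self A x
  simp only [star_trivial]
  rw [this]
  rcases lt_or_eq_of_le (Finset.sum_nonneg fun i _ => mul_self_nonneg ((A *ᵥ x) i)) with hlt | heq
  · exact hlt
  · exact absurd (dotProduct_self_eq_zero.mp heq.symm) hx'

lemma posDef_smul {c : ℝ} (hc : 0 < c) {X : Matrix (Fin m) (Fin m) ℝ} (hX : X.PosDef) :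
    (c • X).PosDef := by
  refine Matrix.posDef_iff_dotProduct_mulVec.mpr ⟨?_, fun x hx => ?_⟩
  · have := hX.1
    simpa [Matrix.IsHermitian, Matrix.conjTranspose_smul] using congrArg (c • ·) this
  · have h1 := hX.dotProduct_mulVec_pos hx
    simp only [Matrix.smul_mulVec, dotProduct_smul, smul_eq_mul] at *
    exact mul_pos hc h1

lemma posSemidef_kron {a b : ℕ} {X : Matrix (Fin a) (Fin a) ℝ} {Y : Matrix (Fin b) (Fin b) ℝ}
    (hX : X.PosSemidef) (hY : Y.PosSemidef) : (X ⊗ₖ Y).PosSemidef := by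
  exact hX.kronecker hY

/-- Cauchy–Schwarz bound: `‖Bx‖² ≤ frobSq B * ‖x‖²`. -/
lemma mulVec_sq_le (B : Matrix (Fin m) (Fin n) ℝ) (x : Fin n → ℝ) :
    (B *ᵥ x) ⬝ᵥ (B *ᵥ x) ≤ frobSq B * (x ⬝ᵥ x) := by
  have h1 : (B *ᵥ x) ⬝ᵥ (B *ᵥ x) = ∑ i, (∑ j, B i j * x j) ^ 2 := by
    simp [dotProduct, Matrix.mulVec, sq]
  have h2 : ∀ i, (∑ j, B i j * x j) ^ 2 ≤ (∑ j, (B i j) ^ 2) * (∑ j, (x j) ^ 2) :=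
    fun i => Finset.sum_mul_sq_le_sq_mul_sq Finset.univ _ _
  calc (B *ᵥ x) ⬝ᵥ (B *ᵥ x) = ∑ i, (∑ j, B i j * x j) ^ 2 := h1
    _ ≤ ∑ i, (∑ j, (B i j) ^ 2) * (∑ j, (x j) ^ 2) := Finset.sum_le_sum fun i _ => h2 i
    _ = (∑ i, ∑ j, (B i j) ^ 2) * (∑ j, (x j) ^ 2) := by rw [Finset.sum_mul]
    _ = frobSq B * (x ⬝ᵥ x) := by
        rw [frobSq]
        congr 1
        simp [dotProduct, sq]

lemma posSemidef_one_sub_scaled {B : Matrix (Fin m) (Fin n) ℝ} (hf : 0 < frobSq B) :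
    ((1 : Matrix (Fin n) (Fin n) ℝ) - (frobSq B)⁻¹ • (Bᵀ * B)).PosSemidef := by
  refine Matrix.posSemidef_iff_dotProduct_mulVec.mpr ⟨?_, fun x => ?_⟩
  · have h1 : ((frobSq B)⁻¹ • (Bᵀ * B)).IsHermitian := by
      have : (Bᵀ * B).IsHermitian := by simpa using Matrix.isHermitian_conjTranspose_mul_self B
      simpa [Matrix.IsHermitian, Matrix.conjTranspose_smul] using
        congrArg ((frobSq B)⁻¹ • ·) this
    simpa [Matrix.IsHermitian, Matrix.conjTranspose_sub] using
      congrArg (fun X => (1 : Matrix (Fin n) (Fin n) ℝ) - X) h1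
  · simp only [star_trivial, Matrix.sub_mulVec, Matrix.one_mulVec,
      dotProduct_sub, Matrix.smul_mulVec, dotProduct_smul, smul_eq_mul]
    rw [quad_transpose_mul_self]
    have hle := mulVec_sq_le B x
    rw [sub_nonneg, inv_mul_le_iff₀ hf]
    linarith [hle]

end Aux

theorem stmt7 {m p n₁ n₂ : ℕ} (A : Matrix (Fin m) (Fin n₁) ℝ) (B : Matrix (Fin p) (Fin n₂) ℝ)
    (hA : A.rank = n₁) (hB : B.rank = n₂) :
    0 ≤ specRad (1 - ((frobSq B)⁻¹ • (Bᵀ * B)) ⊗ₖ ((frobSq A)⁻¹ • (Aᵀ * A))) ∧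
      specRad (1 - ((frobSq B)⁻¹ • (Bᵀ * B)) ⊗ₖ ((frobSq A)⁻¹ • (Aᵀ * A))) < 1 := by
  classical
  set M : Matrix (Fin n₂) (Fin n₂) ℝ := (frobSq B)⁻¹ • (Bᵀ * B) with hM
  set N : Matrix (Fin n₁) (Fin n₁) ℝ := (frobSq A)⁻¹ • (Aᵀ * A) with hN
  set E : Matrix (Fin n₂ × Fin n₁) (Fin n₂ × Fin n₁) ℝ := 1 - M ⊗ₖ N with hE
  set S : Set ℝ := {r : ℝ | ∃ μ ∈ spectrum ℝ E, r = |μ|} with hS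
  -- reduce to bounding every element of the spectrum, or emptiness
  by_cases hdeg : n₁ = 0 ∨ n₂ = 0
  · -- degenerate case: index type empty, spectrum empty
    have hempty : IsEmpty (Fin n₂ × Fin n₁) := by
      rcases hdeg with h | h <;> subst h <;> infer_instance
    haveI := hempty
    haveI : Subsingleton (Matrix (Fin n₂ × Fin n₁) (Fin n₂ × Fin n₁) ℝ) :=
      ⟨fun a b => Matrix.ext fun i => isEmptyElim i⟩
    have hspec : spectrum ℝ E = ∅ := by
      ext μ
      simp only [Set.mem_empty_iff_false, iff_false]
      intro hc
      exact (spectrum.notMem_iff.mpr (isUnit_of_subsingleton _)) hc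
    have hSempty : S = ∅ := by
      ext r
      simp [hS, hspec]
    have : specRad E = 0 := by
      rw [specRad, ← hS, hSempty, Real.sSup_empty]
    constructor <;> rw [show specRad (1 - M ⊗ₖ N) = specRad E from rfl, this] <;> norm_num
  · push_neg at hdeg
    obtain ⟨h₁, h₂⟩ := hdeg
    have hn₁ : 0 < n₁ := Nat.pos_of_ne_zero h₁
    have hn₂ : 0 < n₂ := Nat.pos_of_ne_zero h₂
    have hAne : A ≠ 0 := by
      intro hc
      rw [hc, Matrix.rank_zero] at hA
      omega
    have hBne : B ≠ 0 := by
      intro hc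
      rw [hc, Matrix.rank_zero] at hB
      omega
    have hfA : 0 < frobSq A := frobSq_pos hAne
    have hfB : 0 < frobSq B := frobSq_pos hBne
    have hAinj : Function.Injective A.mulVec := mulVec_inj_of_rank hA
    have hBinj : Function.Injective B.mulVec := mulVec_inj_of_rank hB
    have hNpd : N.PosDef := posDef_smul (inv_pos.mpr hfA) (posDef_transpose_mul_self hAinj)
    have hMpd : M.PosDef := posDef_smul (inv_pos.mpr hfB) (posDef_transpose_mul_self hBinj)
    -- K := M ⊗ₖ N is positive definite
    have hKsd : (M ⊗ₖ N).PosSemidef := posSemidef_kron hMpd.posSemidef hNpd.posSemidef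
    have hKdet : IsUnit (M ⊗ₖ N).det := by
      rw [Matrix.det_kronecker]
      exact IsUnit.mul ((hMpd.det_pos.ne').isUnit.pow _) ((hNpd.det_pos.ne').isUnit.pow _)
    have hKpd : (M ⊗ₖ N).PosDef := by
      refine Matrix.posDef_iff_dotProduct_mulVec.mpr ⟨hKsd.1, fun x hx => ?_⟩
      rcases lt_or_eq_of_le (hKsd.dotProduct_mulVec_nonneg x) with hlt | heq
      · exact hlt
      · exfalso
        have hKinj : Function.Injective (M ⊗ₖ N).mulVec :=
          Matrix.mulVec_injective_iff_isUnit.mpr (Matrix.isUnit_iff_isUnit_det _ |>.mpr hKdet)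
        have h0 := (hKsd.dotProduct_mulVec_zero_iff x).mp heq.symm
        have : x = 0 := by
          apply hKinj
          simpa using h0
        exact hx this
    -- 1 - K is positive semidefinite
    have hMs : ((1 : Matrix (Fin n₂) (Fin n₂) ℝ) - M).PosSemidef := posSemidef_one_sub_scaled hfB
    have hNs : ((1 : Matrix (Fin n₁) (Fin n₁) ℝ) - N).PosSemidef := posSemidef_one_sub_scaled hfA
    have hsplit : E = ((1 : Matrix (Fin n₂) (Fin n₂) ℝ) - M) ⊗ₖ N
        + (1 : Matrix (Fin n₂) (Fin n₂) ℝ) ⊗ₖ ((1 : Matrix (Fin n₁) (Fin n₁) ℝ) - N) := by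
      have e1 : ((1 : Matrix (Fin n₂) (Fin n₂) ℝ) - M) ⊗ₖ N
          = (1 : Matrix (Fin n₂) (Fin n₂) ℝ) ⊗ₖ N - M ⊗ₖ N := by
        rw [eq_sub_iff_add_eq, ← Matrix.add_kronecker, sub_add_cancel]
      have e2 : (1 : Matrix (Fin n₂) (Fin n₂) ℝ) ⊗ₖ ((1 : Matrix (Fin n₁) (Fin n₁) ℝ) - N)
          = 1 - (1 : Matrix (Fin n₂) (Fin n₂) ℝ) ⊗ₖ N := by
        rw [eq_sub_iff_add_eq, ← Matrix.kronecker_add, sub_add_cancel,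
          Matrix.one_kronecker_one]
      rw [hE, e1, e2]
      abel
    have hEsd : E.PosSemidef := by
      rw [hsplit]
      exact (posSemidef_kron hMs hNpd.posSemidef).add
        (posSemidef_kron Matrix.PosSemidef.one hNs)
    -- every spectral value lies in [0, 1)
    have hbound : ∀ μ ∈ spectrum ℝ E, 0 ≤ μ ∧ μ < 1 := by
      intro μ hμ
      rw [← AlgEquiv.spectrum_eq (Matrix.toLinAlgEquiv' :
        Matrix (Fin n₂ × Fin n₁) (Fin n₂ × Fin n₁) ℝ ≃ₐ[ℝ] _) E] at hμ
      have hev : Module.End.HasEigenvalue (Matrix.toLinAlgEquiv' E) μ :=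
        Module.End.hasEigenvalue_iff_mem_spectrum.mpr hμ
      obtain ⟨v, hv⟩ := hev.exists_hasEigenvector
      have hv0 : v ≠ 0 := hv.right
      have heq : E *ᵥ v = μ • v := by
        have h := hv.apply_eq_smul
        rwa [Matrix.toLinAlgEquiv'_apply] at h
      have hvv : 0 < v ⬝ᵥ v := by
        rcases lt_or_eq_of_le (Finset.sum_nonneg fun i _ => mul_self_nonneg (v i)) with hlt | he
        · exact hlt
        · exact absurd (dotProduct_self_eq_zero.mp he.symm) hv0
      have hquad : v ⬝ᵥ E *ᵥ v = μ * (v ⬝ᵥ v) := by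
        rw [heq, dotProduct_smul, smul_eq_mul]
      have h1 : 0 ≤ μ * (v ⬝ᵥ v) := by
        have := hEsd.dotProduct_mulVec_nonneg v
        simpa [hquad] using this
      have hK : 0 < v ⬝ᵥ (M ⊗ₖ N) *ᵥ v := by
        have := hKpd.dotProduct_mulVec_pos hv0
        simpa using this
      have h2 : μ * (v ⬝ᵥ v) < v ⬝ᵥ v := by
        rw [← hquad, hE, Matrix.sub_mulVec, Matrix.one_mulVec, dotProduct_sub]
        linarith
      exact ⟨(mul_nonneg_iff_of_pos_right hvv).mp h1, (mul_lt_iff_lt_one_left hvv).mp h2⟩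
    have hsub : S ⊆ Set.Ico (0:ℝ) 1 := by
      rintro r ⟨μ, hμ, rfl⟩
      obtain ⟨h0, h1'⟩ := hbound μ hμ
      rw [abs_of_nonneg h0]
      exact ⟨h0, h1'⟩
    have hfin : S.Finite := by
      apply ((Matrix.finite_spectrum E).image (fun μ => |μ|)).subset
      rintro r ⟨μ, hμ, rfl⟩
      exact ⟨μ, hμ, rfl⟩
    rcases Set.eq_empty_or_nonempty S with hSe | hSne
    · have : specRad E = 0 := by rw [specRad, ← hS, hSe, Real.sSup_empty]
      constructor <;> rw [show specRad (1 - M ⊗ₖ N) = specRad E from rfl, this] <;> norm_num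
    · have hmem : sSup S ∈ S := hSne.csSup_mem hfin
      have := hsub hmem
      constructor <;> rw [show specRad (1 - M ⊗ₖ N) = specRad E from rfl, specRad, ← hS]
      · exact this.1
      · exact this.2
end

section
/- If ρ_k ≤ C k^{−α} for all k = 1,…,n with constants C > 0 and α > 1, and λ > 0, then ∑_{k=1}^{n} (1 + λ ρ_k^{−1})^{−1} ≤ C' λ^{−1/α} for a constant C' depending only on C and α. -/
open Finset Real

-- tail bound: sum_{k=m+1}^n k^{-α} ≤ m^{1-α}/(α-1)
lemma tail_sum (α : ℝ) (hα : 1 < α) (m n : ℕ) (hm : 1 ≤ m) :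
    ∑ k ∈ Finset.Ioc m n, ((k : ℝ)) ^ (-α) ≤ (m : ℝ) ^ (1 - α) / (α - 1) := by
  have hx0 : (0:ℝ) < m := by exact_mod_cast hm
  have h1 : (0:ℝ) < α - 1 := by linarith
  rcases le_or_gt n m with h | h
  · rw [Finset.Ioc_eq_empty (by omega)]
    simp only [Finset.sum_empty]
    positivity
  · set a := n - m with ha
    have hn : n = m + a := by omega
    have anti : AntitoneOn (fun x : ℝ => x ^ (-α)) (Set.Icc (m:ℝ) ((m:ℝ) + a)) := by
      intro x hx y hy hxy
      exact Real.rpow_le_rpow_of_nonpos (lt_of_lt_of_le hx0 hx.1) hxy (by linarith)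
    have key := anti.sum_le_integral
    have hint : (∫ x in (m:ℝ)..((m:ℝ) + a), x ^ (-α)) =
        (((m:ℝ) + a) ^ (-α + 1) - (m:ℝ) ^ (-α + 1)) / (-α + 1) := by
      apply integral_rpow
      right
      constructor
      · intro hc
        have : α = 1 := by
          have := neg_injective hc; linarith
        linarith
      · rw [Set.uIcc_of_le (by have : (0:ℝ) ≤ a := Nat.cast_nonneg a; linarith)]
        intro hc
        have := (Set.mem_Icc.mp hc).1
        linarith
    have hsum : ∑ k ∈ Finset.Ioc m n, ((k : ℝ)) ^ (-α)
        = ∑ i ∈ Finset.range a, ((m:ℝ) + ((i + 1 : ℕ) : ℝ)) ^ (-α) := by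
      rw [← Finset.Ico_add_one_add_one_eq_Ioc, Finset.sum_Ico_eq_sum_range]
      have : n + 1 - (m + 1) = a := by omega
      rw [this]
      apply Finset.sum_congr rfl
      intro i _
      push_cast
      ring_nf
    rw [hsum]
    refine le_trans key ?_
    rw [hint]
    have h2 : (0:ℝ) ≤ ((m:ℝ) + a) ^ (-α + 1) := by positivity
    have hrw : (-α + 1) = -(α - 1) := by ring
    have : (((m:ℝ) + a) ^ (-α + 1) - (m:ℝ) ^ (-α + 1)) / (-α + 1)
        = ((m:ℝ) ^ (-α + 1) - ((m:ℝ) + a) ^ (-α + 1)) / (α - 1) := by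
      rw [div_eq_div_iff (by linarith) (by linarith)]
      ring
    rw [this]
    have hexp : (1 - α) = (-α + 1) := by ring
    rw [hexp]
    gcongr
    linarith

lemma key_sum (α : ℝ) (hα : 1 < α) (B : ℝ) (hB : 0 < B) (n : ℕ) :
    ∑ k ∈ Finset.Ioc 0 n, min 1 (B * (k : ℝ) ^ (-α)) ≤
      (1 + (2 ^ α + 1) / (α - 1)) * B ^ (1 / α) := by
  have h1 : (0:ℝ) < α - 1 := by linarith
  have h2α : (0:ℝ) < 2 ^ α := Real.rpow_pos_of_pos two_pos α
  set K : ℝ := 1 + (2 ^ α + 1) / (α - 1) with hK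
  have hX : (0:ℝ) ≤ (2 ^ α + 1) / (α - 1) := by positivity
  have hK1 : (1:ℝ) ≤ K := by rw [hK]; linarith
  have hB1 : (0:ℝ) < B ^ (1/α) := Real.rpow_pos_of_pos hB _
  set m := ⌊B ^ (1/α)⌋₊ with hm
  have hm_le : (m:ℝ) ≤ B ^ (1/α) := Nat.floor_le hB1.le
  have hm_lt : B ^ (1/α) < m + 1 := Nat.lt_floor_add_one _
  have hBval : (B ^ (1/α)) ^ α = B := by
    rw [← Real.rpow_mul hB.le, one_div_mul_cancel (by linarith : α ≠ 0), Real.rpow_one]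
  rcases le_or_gt n m with hnm | hmn
  · calc ∑ k ∈ Finset.Ioc 0 n, min 1 (B * (k : ℝ) ^ (-α))
        ≤ ∑ k ∈ Finset.Ioc 0 n, (1:ℝ) := Finset.sum_le_sum fun k _ => min_le_left _ _
      _ = n := by simp
      _ ≤ K * B ^ (1/α) := by
          have hn : (n:ℝ) ≤ (m:ℝ) := by exact_mod_cast hnm
          rw [hK]
          nlinarith [hm_le, hB1.le]
  · rw [← Finset.sum_Ioc_consecutive _ (Nat.zero_le m) hmn.le]
    have head : ∑ k ∈ Finset.Ioc 0 m, min 1 (B * (k : ℝ) ^ (-α)) ≤ B ^ (1/α) := by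
      calc ∑ k ∈ Finset.Ioc 0 m, min 1 (B * (k : ℝ) ^ (-α))
          ≤ ∑ k ∈ Finset.Ioc 0 m, (1:ℝ) := Finset.sum_le_sum fun k _ => min_le_left _ _
        _ = m := by simp
        _ ≤ B ^ (1/α) := hm_le
    rcases Nat.eq_zero_or_pos m with hm0 | hm1
    · -- m = 0 : B < 1
      have hBle1 : B ≤ 1 := by
        have : B ^ (1/α) < 1 := by rw [hm0] at hm_lt; simpa using hm_lt
        nlinarith [Real.rpow_le_rpow hB1.le this.le (by linarith : (0:ℝ) ≤ α),
          Real.one_rpow α, hBval]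
      have hBB : B ≤ B ^ (1/α) := by
        nth_rewrite 1 [← Real.rpow_one B]
        apply Real.rpow_le_rpow_of_exponent_ge hB hBle1
        rw [div_le_one (by linarith)]; linarith
      have hn1 : 1 ≤ n := by omega
      have tail : ∑ k ∈ Finset.Ioc m n, min 1 (B * (k : ℝ) ^ (-α))
          ≤ B * (1 + 1/(α-1)) := by
        calc ∑ k ∈ Finset.Ioc m n, min 1 (B * (k : ℝ) ^ (-α))
            ≤ ∑ k ∈ Finset.Ioc m n, B * (k : ℝ) ^ (-α) :=
              Finset.sum_le_sum fun k _ => min_le_right _ _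
          _ = B * ∑ k ∈ Finset.Ioc m n, (k : ℝ) ^ (-α) := by rw [Finset.mul_sum]
          _ ≤ B * (1 + 1/(α-1)) := by
              apply mul_le_mul_of_nonneg_left _ hB.le
              rw [hm0, ← Finset.sum_Ioc_consecutive _ (Nat.zero_le 1) hn1]
              have e0 : (Finset.Ioc (0:ℕ) 1) = {1} := rfl
              have e1 : ∑ k ∈ Finset.Ioc (0:ℕ) 1, ((k:ℝ)) ^ (-α) = 1 := by
                rw [e0]; simp
              rw [e1]
              have := tail_sum α hα 1 n le_rfl
              simp only [Nat.cast_one, Real.one_rpow] at this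
              linarith
      have hsum0 : ∑ k ∈ Finset.Ioc 0 m, min 1 (B * (k : ℝ) ^ (-α)) = 0 := by
        rw [hm0]; simp
      rw [hsum0, zero_add]
      calc ∑ k ∈ Finset.Ioc m n, min 1 (B * (k : ℝ) ^ (-α))
          ≤ B * (1 + 1/(α-1)) := tail
        _ ≤ B ^ (1/α) * (1 + 1/(α-1)) := by
            apply mul_le_mul_of_nonneg_right hBB (by positivity)
        _ ≤ K * B ^ (1/α) := by
            rw [hK, mul_comm (B ^ (1/α))]
            apply mul_le_mul_of_nonneg_right _ hB1.le
            have : (1:ℝ)/(α-1) ≤ (2 ^ α + 1)/(α-1) := by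
              gcongr <;> linarith
            linarith
    · -- m ≥ 1
      have hmR : (1:ℝ) ≤ (m:ℝ) := by exact_mod_cast hm1
      have hmpos : (0:ℝ) < m := by linarith
      have hBlt : B ≤ 2 ^ α * (m:ℝ) ^ α := by
        have h2m : ((m:ℝ) + 1) ≤ 2 * m := by linarith
        have hr1 : B < ((m:ℝ) + 1) ^ α := by
          calc B = (B ^ (1/α)) ^ α := hBval.symm
            _ < ((m:ℝ) + 1) ^ α :=
              Real.rpow_lt_rpow hB1.le hm_lt (by linarith)
        have hr2 : ((m:ℝ) + 1) ^ α ≤ (2 * m) ^ α :=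
          Real.rpow_le_rpow (by linarith) h2m (by linarith)
        have hr3 : ((2:ℝ) * m) ^ α = 2 ^ α * (m:ℝ) ^ α :=
          Real.mul_rpow (by norm_num) hmpos.le
        linarith [hr1, hr2, hr3.le, hr3.ge]
      have hmm : (m:ℝ) ^ α * (m:ℝ) ^ (1 - α) = m := by
        rw [← Real.rpow_add hmpos]
        simp
      have tail : ∑ k ∈ Finset.Ioc m n, min 1 (B * (k : ℝ) ^ (-α))
          ≤ 2 ^ α * (m:ℝ) / (α - 1) := by
        calc ∑ k ∈ Finset.Ioc m n, min 1 (B * (k : ℝ) ^ (-α))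
            ≤ ∑ k ∈ Finset.Ioc m n, B * (k : ℝ) ^ (-α) :=
              Finset.sum_le_sum fun k _ => min_le_right _ _
          _ = B * ∑ k ∈ Finset.Ioc m n, (k : ℝ) ^ (-α) := by rw [Finset.mul_sum]
          _ ≤ B * ((m:ℝ) ^ (1-α) / (α-1)) :=
              mul_le_mul_of_nonneg_left (tail_sum α hα m n hm1) hB.le
          _ ≤ 2 ^ α * (m:ℝ) ^ α * ((m:ℝ) ^ (1-α) / (α-1)) := by
              apply mul_le_mul_of_nonneg_right hBlt (by positivity)
          _ = 2 ^ α * (m:ℝ) / (α - 1) := by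
              field_simp
              nlinarith [hmm]
      calc ∑ k ∈ Finset.Ioc 0 m, min 1 (B * (k : ℝ) ^ (-α)) +
            ∑ k ∈ Finset.Ioc m n, min 1 (B * (k : ℝ) ^ (-α))
          ≤ B ^ (1/α) + 2 ^ α * (m:ℝ) / (α - 1) := add_le_add head tail
        _ ≤ B ^ (1/α) + 2 ^ α * B ^ (1/α) / (α - 1) := by
            gcongr
        _ ≤ K * B ^ (1/α) := by
            rw [hK]
            have h0 : 0 ≤ B ^ (1/α) / (α - 1) := by positivity
            have expand : (1 + (2 ^ α + 1) / (α - 1)) * B ^ (1/α)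
                = B ^ (1/α) + 2 ^ α * B ^ (1/α) / (α-1) + B ^ (1/α)/(α-1) := by
              field_simp; ring
            linarith

theorem stmt13 (C α : ℝ) (hC : 0 < C) (hα : 1 < α) :
    ∃ C' > 0, ∀ (n : ℕ) (ρ : ℕ → ℝ) (lam : ℝ), 0 < lam →
      (∀ k ∈ Finset.Icc 1 n, 0 < ρ k ∧ ρ k ≤ C * (k : ℝ) ^ (-α)) →
      ∑ k ∈ Finset.Icc 1 n, (1 + lam * (ρ k)⁻¹)⁻¹ ≤ C' * lam ^ (-1 / α) := by
  have h1 : (0:ℝ) < α - 1 := by linarith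
  refine ⟨C ^ (1/α) * (1 + (2 ^ α + 1) / (α - 1)), by positivity, ?_⟩
  intro n ρ lam hlam hρ
  have hBpos : 0 < C / lam := by positivity
  have key := key_sum α hα (C/lam) hBpos n
  have hIcc : Finset.Icc 1 n = Finset.Ioc 0 n := by
    rw [← Finset.Icc_add_one_left_eq_Ioc, zero_add]
  have step : ∑ k ∈ Finset.Icc 1 n, (1 + lam * (ρ k)⁻¹)⁻¹
      ≤ ∑ k ∈ Finset.Icc 1 n, min 1 ((C/lam) * (k:ℝ) ^ (-α)) := by
    apply Finset.sum_le_sum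
    intro k hk
    obtain ⟨hρpos, hρle⟩ := hρ k hk
    have hkpos : 0 < k := (Finset.mem_Icc.mp hk).1
    have hkR : (0:ℝ) < (k:ℝ) := by exact_mod_cast hkpos
    have hquot : 0 < lam * (ρ k)⁻¹ := by positivity
    apply le_min
    · have hge : (1:ℝ) ≤ 1 + lam * (ρ k)⁻¹ := by linarith
      exact inv_le_one_of_one_le₀ hge
    · have e : (1 + lam * (ρ k)⁻¹)⁻¹ ≤ (lam * (ρ k)⁻¹)⁻¹ := by
        apply inv_anti₀ hquot
        linarith
      refine e.trans ?_
      rw [mul_inv, inv_inv]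
      have e2 : C / lam * (k:ℝ) ^ (-α) = lam⁻¹ * (C * (k:ℝ) ^ (-α)) := by ring
      rw [e2]
      exact mul_le_mul_of_nonneg_left hρle (by positivity)
  calc ∑ k ∈ Finset.Icc 1 n, (1 + lam * (ρ k)⁻¹)⁻¹
      ≤ ∑ k ∈ Finset.Icc 1 n, min 1 ((C/lam) * (k:ℝ) ^ (-α)) := step
    _ = ∑ k ∈ Finset.Ioc 0 n, min 1 ((C/lam) * (k:ℝ) ^ (-α)) := by rw [hIcc]
    _ ≤ (1 + (2 ^ α + 1) / (α - 1)) * (C/lam) ^ (1/α) := key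
    _ = C ^ (1/α) * (1 + (2 ^ α + 1) / (α - 1)) * lam ^ (-1 / α) := by
        rw [Real.div_rpow hC.le hlam.le,
          show (-1/α) = -(1/α) by ring, Real.rpow_neg hlam.le, div_eq_mul_inv]
        ring
end

section
/- Define ‖u‖_λ² = ‖Qu‖² + λ‖u‖² for u ∈ ℝⁿ with λ > 0. If p̂* minimizes ‖Qp − qᵉ‖² + λ‖p‖² and qᵉ = Qp̄ + η for some p̄ ∈ ℝⁿ and η ∈ ℝᵐ, then ‖p̂* − p̄‖_λ ≤ λ^{1/2}‖p̄‖ + sup_{u ≠ 0} |(η, Qu)| / ‖u‖_λ. -/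
open Matrix

noncomputable def euclidSq {ι : Type*} [Fintype ι] (x : ι → ℝ) : ℝ := ∑ i, (x i) ^ 2

/-- The norm `‖u‖_λ = (‖Qu‖² + λ‖u‖²)^{1/2}`. -/
noncomputable def lamNorm {m n : ℕ} (Q : Matrix (Fin m) (Fin n) ℝ) (lam : ℝ)
    (u : Fin n → ℝ) : ℝ :=
  Real.sqrt (euclidSq (Q.mulVec u) + lam * euclidSq u)

lemma euclidSq_eq_dot {ι : Type*} [Fintype ι] (x : ι → ℝ) : euclidSq x = x ⬝ᵥ x := by
  simp [euclidSq, dotProduct, sq]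

lemma euclidSq_nonneg {ι : Type*} [Fintype ι] (x : ι → ℝ) : 0 ≤ euclidSq x :=
  Finset.sum_nonneg fun _ _ => sq_nonneg _

lemma dot_self_nonneg {ι : Type*} [Fintype ι] (x : ι → ℝ) : 0 ≤ x ⬝ᵥ x := by
  rw [← euclidSq_eq_dot]; exact euclidSq_nonneg x

lemma cauchy_schwarz_dot {ι : Type*} [Fintype ι] (x y : ι → ℝ) :
    |x ⬝ᵥ y| ≤ Real.sqrt (x ⬝ᵥ x) * Real.sqrt (y ⬝ᵥ y) := by
  have h := Finset.sum_mul_sq_le_sq_mul_sq Finset.univ x y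
  have habs : |x ⬝ᵥ y| = Real.sqrt ((x ⬝ᵥ y) ^ 2) := by rw [Real.sqrt_sq_eq_abs]
  rw [habs, ← Real.sqrt_mul (dot_self_nonneg x)]
  apply Real.sqrt_le_sqrt
  have e1 : x ⬝ᵥ x = ∑ i, x i ^ 2 := by simp [dotProduct, sq]
  have e2 : y ⬝ᵥ y = ∑ i, y i ^ 2 := by simp [dotProduct, sq]
  rw [e1, e2]
  simpa [dotProduct] using h

lemma dot_expand {ι : Type*} [Fintype ι] (x y : ι → ℝ) (t : ℝ) :
    (x + t • y) ⬝ᵥ (x + t • y) = x ⬝ᵥ x + 2 * t * (x ⬝ᵥ y) + t ^ 2 * (y ⬝ᵥ y) := by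
  simp only [dotProduct_add, add_dotProduct, dotProduct_smul, smul_dotProduct, smul_eq_mul,
    dotProduct_comm y x]
  ring

theorem stmt16 {m n : ℕ} (Q : Matrix (Fin m) (Fin n) ℝ) (lam : ℝ) (hlam : 0 < lam)
    (pbar : Fin n → ℝ) (η : Fin m → ℝ) (qe : Fin m → ℝ)
    (hqe : qe = Q.mulVec pbar + η) (phat : Fin n → ℝ)
    (hmin : ∀ p : Fin n → ℝ,
      euclidSq (Q.mulVec phat - qe) + lam * euclidSq phat ≤
        euclidSq (Q.mulVec p - qe) + lam * euclidSq p) :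
    lamNorm Q lam (phat - pbar) ≤
      Real.sqrt lam * Real.sqrt (euclidSq pbar) +
        sSup {r : ℝ | ∃ u : Fin n → ℝ, u ≠ 0 ∧ r = |η ⬝ᵥ Q.mulVec u| / lamNorm Q lam u} := by
  have hNpos : ∀ u : Fin n → ℝ, u ≠ 0 → 0 < lamNorm Q lam u := by
    intro u hu
    have hdot : 0 < u ⬝ᵥ u := by
      obtain ⟨i, hi⟩ := Function.ne_iff.mp hu
      have : 0 < ∑ j, u j * u j :=
        Finset.sum_pos' (fun j _ => mul_self_nonneg _)
          ⟨i, Finset.mem_univ i, mul_self_pos.mpr hi⟩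
      simpa [dotProduct] using this
    have : 0 < euclidSq (Q.mulVec u) + lam * euclidSq u := by
      have h1 := euclidSq_nonneg (Q.mulVec u)
      have h2 : 0 < euclidSq u := by rw [euclidSq_eq_dot]; exact hdot
      nlinarith
    exact Real.sqrt_pos.mpr this
  set S := {r : ℝ | ∃ u : Fin n → ℝ, u ≠ 0 ∧ r = |η ⬝ᵥ Q.mulVec u| / lamNorm Q lam u} with hS
  have hbdd : BddAbove S := by
    refine ⟨Real.sqrt (euclidSq η), ?_⟩
    rintro r ⟨u, hu, rfl⟩
    have hNu := hNpos u hu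
    rw [div_le_iff₀ hNu]
    calc |η ⬝ᵥ Q.mulVec u| ≤ Real.sqrt (η ⬝ᵥ η) * Real.sqrt (Q.mulVec u ⬝ᵥ Q.mulVec u) :=
          cauchy_schwarz_dot η (Q.mulVec u)
      _ ≤ Real.sqrt (euclidSq η) * lamNorm Q lam u := by
          apply mul_le_mul
          · rw [euclidSq_eq_dot]
          · rw [← euclidSq_eq_dot]
            exact Real.sqrt_le_sqrt (by nlinarith [euclidSq_nonneg u, hlam.le])
          · exact Real.sqrt_nonneg _
          · exact Real.sqrt_nonneg _
  have hSnonneg : 0 ≤ sSup S := by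
    apply Real.sSup_nonneg
    rintro r ⟨u, hu, rfl⟩
    exact div_nonneg (abs_nonneg _) (hNpos u hu).le
  -- normal equations
  have key : ∀ v : Fin n → ℝ,
      (Q.mulVec phat - qe) ⬝ᵥ (Q.mulVec v) + lam * (phat ⬝ᵥ v) = 0 := by
    intro v
    set L := (Q.mulVec phat - qe) ⬝ᵥ (Q.mulVec v) + lam * (phat ⬝ᵥ v) with hL
    set C := (Q.mulVec v) ⬝ᵥ (Q.mulVec v) + lam * (v ⬝ᵥ v) with hC
    have hCnn : 0 ≤ C := by
      have h1 := dot_self_nonneg (Q.mulVec v)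
      have h2 := dot_self_nonneg v
      nlinarith
    have hq : ∀ t : ℝ, 0 ≤ 2 * t * L + t ^ 2 * C := by
      intro t
      have h := hmin (phat + t • v)
      have e1 : Q.mulVec (phat + t • v) - qe = (Q.mulVec phat - qe) + t • Q.mulVec v := by
        rw [mulVec_add, mulVec_smul]; abel
      rw [e1] at h
      rw [euclidSq_eq_dot, euclidSq_eq_dot, euclidSq_eq_dot, euclidSq_eq_dot,
        dot_expand, dot_expand] at h
      rw [hL, hC]
      nlinarith [h]
    have hC1 : (0:ℝ) < C + 1 := by linarith
    have h1 := hq (-L / (C + 1))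
    have e : 2 * (-L / (C + 1)) * L + (-L / (C + 1)) ^ 2 * C
        = (-(2 * L ^ 2) * (C + 1) + L ^ 2 * C) / (C + 1) ^ 2 := by
      field_simp
    rw [e] at h1
    have h3 : 0 ≤ -(2 * L ^ 2) * (C + 1) + L ^ 2 * C := by
      have := (le_div_iff₀ (pow_pos hC1 2)).mp h1
      simpa using this
    nlinarith [sq_nonneg L]
  -- set up w = phat - pbar
  set w := phat - pbar with hwdef
  by_cases hw : w = 0
  · rw [hw]
    have h0 : lamNorm Q lam (0 : Fin n → ℝ) = 0 := by
      simp [lamNorm, euclidSq]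
    rw [h0]
    have := Real.sqrt_nonneg lam
    have := Real.sqrt_nonneg (euclidSq pbar)
    nlinarith
  · have hN := hNpos w hw
    set N := lamNorm Q lam w with hNdef
    have hNsq : N ^ 2 = Q.mulVec w ⬝ᵥ Q.mulVec w + lam * (w ⬝ᵥ w) := by
      rw [hNdef, lamNorm, Real.sq_sqrt, euclidSq_eq_dot, euclidSq_eq_dot]
      have h1 := euclidSq_nonneg (Q.mulVec w)
      have h2 := euclidSq_nonneg w
      nlinarith
    have hid : N ^ 2 = η ⬝ᵥ Q.mulVec w - lam * (pbar ⬝ᵥ w) := by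
      have hk := key w
      have e1 : Q.mulVec phat - qe = Q.mulVec w - η := by
        rw [hqe, hwdef, mulVec_sub]; abel
      rw [e1, sub_dotProduct] at hk
      have e2 : phat ⬝ᵥ w = w ⬝ᵥ w + pbar ⬝ᵥ w := by
        have hph : phat = w + pbar := by rw [hwdef]; abel
        rw [hph, add_dotProduct]
      rw [e2] at hk
      rw [hNsq]
      linarith
    have hb1 : |η ⬝ᵥ Q.mulVec w| ≤ sSup S * N := by
      have hmem : |η ⬝ᵥ Q.mulVec w| / N ∈ S := ⟨w, hw, rfl⟩
      have hle := le_csSup hbdd hmem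
      calc |η ⬝ᵥ Q.mulVec w| = |η ⬝ᵥ Q.mulVec w| / N * N := by field_simp
        _ ≤ sSup S * N := mul_le_mul_of_nonneg_right hle hN.le
    have hb2 : lam * |pbar ⬝ᵥ w| ≤ Real.sqrt lam * Real.sqrt (euclidSq pbar) * N := by
      have hcs := cauchy_schwarz_dot pbar w
      set s := Real.sqrt lam with hsdef
      have hss : s * s = lam := Real.mul_self_sqrt hlam.le
      have hsnn : 0 ≤ s := Real.sqrt_nonneg lam
      have hwn : s * Real.sqrt (w ⬝ᵥ w) ≤ N := by
        rw [hsdef, ← Real.sqrt_mul hlam.le]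
        rw [hNdef, lamNorm, euclidSq_eq_dot, euclidSq_eq_dot]
        exact Real.sqrt_le_sqrt (by nlinarith [dot_self_nonneg (Q.mulVec w)])
      rw [euclidSq_eq_dot, ← hss]
      set a := Real.sqrt (pbar ⬝ᵥ pbar) with hadef
      set b := Real.sqrt (w ⬝ᵥ w) with hbdef
      have hann : 0 ≤ a := Real.sqrt_nonneg _
      have hbnn : 0 ≤ b := Real.sqrt_nonneg _
      have h1 : s * s * |pbar ⬝ᵥ w| ≤ s * s * (a * b) :=
        mul_le_mul_of_nonneg_left hcs (by positivity)
      have h2 : s * a * (s * b) ≤ s * a * N :=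
        mul_le_mul_of_nonneg_left hwn (by positivity)
      nlinarith
    have hfinal : N * N ≤ (Real.sqrt lam * Real.sqrt (euclidSq pbar) + sSup S) * N := by
      have ha : η ⬝ᵥ Q.mulVec w ≤ |η ⬝ᵥ Q.mulVec w| := le_abs_self _
      have hb : -(pbar ⬝ᵥ w) ≤ |pbar ⬝ᵥ w| := neg_le_abs _
      nlinarith [hid, hb1, hb2]
    have := le_of_mul_le_mul_right hfinal hN
    linarith
end
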